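/- Let $Z$ be a fractional Brownian motion of Hurst parameter $H \in (0,1)$, i.e. a centered Gaussian process with covariance $\mathbb{E}(Z_s Z_t) = \frac{1}{2}(s^{2H} + t^{2H} - |t-s|^{2H})$. Fix $T > 0$, $\Delta \geqslant T$, set $t_i(\Delta) = (i-1)(T+\Delta)$ and $Z^i_t = Z_{t_i(\Delta)+t} - Z_{t_i(\Delta)}$. Then for all $i \neq k$ in $\{1,\dots,N\}$ and all $s \in [0,T]$, $|\mathbb{E}(Z^i_s Z^k_s)| \leqslant 8H|2H-1| T^2 |k-i|^{2H-2} \Delta^{2H-2}$. -/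
import Mathlib

open MeasureTheory Real

lemma psi_bound (p a b : ℝ) (ha : 0 < a) (hab : a ≤ b) (hp : p ≤ 1) :
    |b ^ p - a ^ p| ≤ |p| * a ^ (p - 1) * (b - a) := by
  have h := Convex.norm_image_sub_le_of_norm_hasDerivWithin_le
    (f := fun v : ℝ => v ^ p) (f' := fun v => p * v ^ (p - 1)) (C := |p| * a ^ (p - 1))
    (s := Set.Icc a b)
    (fun v hv => (Real.hasDerivAt_rpow_const
      (Or.inl (ne_of_gt (lt_of_lt_of_le ha hv.1)))).hasDerivWithinAt)
    (fun v hv => by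
      have hv0 : 0 < v := lt_of_lt_of_le ha hv.1
      rw [Real.norm_eq_abs, abs_mul, abs_of_nonneg (Real.rpow_nonneg hv0.le _)]
      exact mul_le_mul_of_nonneg_left
        (Real.rpow_le_rpow_of_nonpos ha hv.1 (by linarith : p - 1 ≤ 0))
        (abs_nonneg p))
    (convex_Icc a b) ⟨le_rfl, hab⟩ ⟨hab, le_rfl⟩
  simpa [Real.norm_eq_abs, abs_of_nonneg (sub_nonneg.2 hab)] using h

lemma key_bound (H : ℝ) (hH0 : 0 < H) (hH1 : H < 1) (s d : ℝ) (hs : 0 ≤ s)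
    (hd0 : 0 < d) (hd : 2 * s ≤ d) :
    |(d + s) ^ (2 * H) + (d - s) ^ (2 * H) - 2 * d ^ (2 * H)|
      ≤ 16 * H * |2 * H - 1| * s ^ 2 * d ^ (2 * H - 2) := by
  have hdpos : ∀ u ∈ Set.Icc (0:ℝ) s, 0 < d - u ∧ 0 < d + u := by
    intro u hu
    constructor <;> nlinarith [hu.1, hu.2]
  -- derivative bound
  have hderiv : ∀ u ∈ Set.Icc (0:ℝ) s,
      HasDerivWithinAt (fun u : ℝ => (d + u) ^ (2 * H) + (d - u) ^ (2 * H))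
        (1 * (2 * H) * (d + u) ^ (2 * H - 1) + (-1) * (2 * H) * (d - u) ^ (2 * H - 1))
        (Set.Icc (0:ℝ) s) u := by
    intro u hu
    obtain ⟨h1, h2⟩ := hdpos u hu
    exact (((hasDerivAt_id u).const_add d).rpow_const (Or.inl h2.ne')).hasDerivWithinAt.add
      ((((hasDerivAt_id u).const_sub d |>.rpow_const (Or.inl h1.ne'))).hasDerivWithinAt)
  have hbound : ∀ u ∈ Set.Icc (0:ℝ) s,
      ‖1 * (2 * H) * (d + u) ^ (2 * H - 1) + (-1) * (2 * H) * (d - u) ^ (2 * H - 1)‖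
        ≤ 16 * H * |2 * H - 1| * s * d ^ (2 * H - 2) := by
    intro u hu
    obtain ⟨h1, h2⟩ := hdpos u hu
    have key := psi_bound (2 * H - 1) (d - u) (d + u) h1 (by linarith [hu.1]) (by linarith)
    have e1 : (d + u) - (d - u) = 2 * u := by ring
    rw [e1] at key
    -- (d-u)^(2H-2) ≤ 4 * d^(2H-2)
    have h4 : (d - u) ^ (2 * H - 1 - 1) ≤ 4 * d ^ (2 * H - 2) := by
      have hdu : d / 2 ≤ d - u := by nlinarith [hu.2]
      have := Real.rpow_le_rpow_of_nonpos (by linarith : (0:ℝ) < d / 2) hdu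
        (by linarith : 2 * H - 2 ≤ 0)
      calc (d - u) ^ (2 * H - 1 - 1) = (d - u) ^ (2 * H - 2) := by ring_nf
        _ ≤ (d / 2) ^ (2 * H - 2) := this
        _ = d ^ (2 * H - 2) * (2:ℝ) ^ (2 - 2 * H) := by
            rw [Real.div_rpow hd0.le (by norm_num),
              show (2:ℝ) - 2 * H = -(2 * H - 2) by ring,
              Real.rpow_neg (by norm_num : (0:ℝ) ≤ 2), div_eq_mul_inv]
        _ ≤ d ^ (2 * H - 2) * 4 := by
            have : (2:ℝ) ^ (2 - 2 * H) ≤ (2:ℝ) ^ (2:ℝ) := by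
              apply Real.rpow_le_rpow_of_exponent_le (by norm_num); linarith
            have h22 : (2:ℝ) ^ (2:ℝ) = 4 := by
              rw [show (2:ℝ) = ((2:ℕ):ℝ) by norm_num, Real.rpow_natCast]; norm_num
            nlinarith [Real.rpow_nonneg hd0.le (2 * H - 2)]
        _ = 4 * d ^ (2 * H - 2) := by ring
    have habs : |(d + u) ^ (2 * H - 1) - (d - u) ^ (2 * H - 1)|
        ≤ |2 * H - 1| * (4 * d ^ (2 * H - 2)) * (2 * u) := by
      refine le_trans key ?_
      have : |2 * H - 1| * (d - u) ^ (2 * H - 1 - 1) ≤ |2 * H - 1| * (4 * d ^ (2 * H - 2)) :=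
        mul_le_mul_of_nonneg_left h4 (abs_nonneg _)
      exact mul_le_mul_of_nonneg_right this (by linarith [hu.1])
    rw [Real.norm_eq_abs]
    have e2 : 1 * (2 * H) * (d + u) ^ (2 * H - 1) + (-1) * (2 * H) * (d - u) ^ (2 * H - 1)
        = (2 * H) * ((d + u) ^ (2 * H - 1) - (d - u) ^ (2 * H - 1)) := by ring
    rw [e2, abs_mul, abs_of_pos (by linarith : (0:ℝ) < 2 * H)]
    calc 2 * H * |(d + u) ^ (2 * H - 1) - (d - u) ^ (2 * H - 1)|
        ≤ 2 * H * (|2 * H - 1| * (4 * d ^ (2 * H - 2)) * (2 * u)) := by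
          exact mul_le_mul_of_nonneg_left habs (by linarith)
      _ ≤ 2 * H * (|2 * H - 1| * (4 * d ^ (2 * H - 2)) * (2 * s)) := by
          have hu2 : u ≤ s := hu.2
          gcongr
      _ = 16 * H * |2 * H - 1| * s * d ^ (2 * H - 2) := by ring
  have := Convex.norm_image_sub_le_of_norm_hasDerivWithin_le hderiv hbound
    (convex_Icc 0 s) (Set.left_mem_Icc.2 hs) (Set.right_mem_Icc.2 hs)
  simp only [Real.norm_eq_abs, add_zero, sub_zero, abs_of_nonneg hs] at this
  calc |(d + s) ^ (2 * H) + (d - s) ^ (2 * H) - 2 * d ^ (2 * H)|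
      = |(d + s) ^ (2 * H) + (d - s) ^ (2 * H) - (d ^ (2 * H) + d ^ (2 * H))| := by
        rw [show (2:ℝ) * d ^ (2 * H) = d ^ (2 * H) + d ^ (2 * H) by ring]
    _ ≤ 16 * H * |2 * H - 1| * s * d ^ (2 * H - 2) * s := this
    _ = 16 * H * |2 * H - 1| * s ^ 2 * d ^ (2 * H - 2) := by ring

set_option maxHeartbeats 1000000 in
lemma cross_cov {Ω : Type*} [MeasurableSpace Ω] (P : Measure Ω) [IsProbabilityMeasure P]
    (H : ℝ) (hH : H ∈ Set.Ioo (0:ℝ) 1)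
    (T Δ : ℝ) (hT : 0 < T) (hΔ : T ≤ Δ)
    (Z : ℝ → Ω → ℝ)
    (hcov : ∀ s t : ℝ, 0 ≤ s → 0 ≤ t →
      ∫ ω, Z s ω * Z t ω ∂P
        = (1 / 2) * (s ^ (2 * H) + t ^ (2 * H) - |t - s| ^ (2 * H)))
    (hint : ∀ s t : ℝ, Integrable (fun ω => Z s ω * Z t ω) P)
    (i k : ℕ) (hi : 1 ≤ i) (hik : i < k) (s : ℝ) (hs : s ∈ Set.Icc (0:ℝ) T) :
    |∫ ω, (Z (((i : ℝ) - 1) * (T + Δ) + s) ω - Z (((i : ℝ) - 1) * (T + Δ)) ω)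
          * (Z (((k : ℝ) - 1) * (T + Δ) + s) ω - Z (((k : ℝ) - 1) * (T + Δ)) ω) ∂P|
      ≤ 8 * H * |2 * H - 1| * T ^ 2
          * |(k : ℝ) - (i : ℝ)| ^ (2 * H - 2) * Δ ^ (2 * H - 2) := by
  obtain ⟨hH0, hH1⟩ := hH
  obtain ⟨hs0, hsT⟩ := hs
  set a : ℝ := ((i : ℝ) - 1) * (T + Δ) with ha_def
  set b : ℝ := ((k : ℝ) - 1) * (T + Δ) with hb_def
  have hi1 : (1:ℝ) ≤ (i:ℝ) := by exact_mod_cast hi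
  have hki : (1:ℝ) ≤ (k:ℝ) - (i:ℝ) := by
    have : (i:ℝ) + 1 ≤ (k:ℝ) := by exact_mod_cast hik
    linarith
  have hTΔ : 0 < T + Δ := by linarith
  have ha0 : 0 ≤ a := mul_nonneg (by linarith) hTΔ.le
  have hb0 : 0 ≤ b := mul_nonneg (by linarith) hTΔ.le
  set d : ℝ := b - a with hd_def
  have hdval : d = ((k:ℝ) - (i:ℝ)) * (T + Δ) := by rw [hd_def, ha_def, hb_def]; ring
  have hdge : T + Δ ≤ d := by
    have h := mul_le_mul_of_nonneg_right hki hTΔ.le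
    rw [hdval]; linarith
  have hd0 : 0 < d := by linarith
  have hds : 2 * s ≤ d := by linarith
  -- expand the integral
  have hI : ∫ ω, (Z (a + s) ω - Z a ω) * (Z (b + s) ω - Z b ω) ∂P
      = (∫ ω, Z (a + s) ω * Z (b + s) ω ∂P) - (∫ ω, Z (a + s) ω * Z b ω ∂P)
        - ((∫ ω, Z a ω * Z (b + s) ω ∂P) - (∫ ω, Z a ω * Z b ω ∂P)) := by
    calc ∫ ω, (Z (a + s) ω - Z a ω) * (Z (b + s) ω - Z b ω) ∂P
        = ∫ ω, (Z (a + s) ω * Z (b + s) ω - Z (a + s) ω * Z b ω)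
            - (Z a ω * Z (b + s) ω - Z a ω * Z b ω) ∂P := by
          congr 1; funext ω; ring
      _ = (∫ ω, Z (a + s) ω * Z (b + s) ω - Z (a + s) ω * Z b ω ∂P)
            - ∫ ω, Z a ω * Z (b + s) ω - Z a ω * Z b ω ∂P :=
          integral_sub ((hint _ _).sub (hint _ _)) ((hint _ _).sub (hint _ _))
      _ = (∫ ω, Z (a + s) ω * Z (b + s) ω ∂P) - (∫ ω, Z (a + s) ω * Z b ω ∂P)
            - ((∫ ω, Z a ω * Z (b + s) ω ∂P) - (∫ ω, Z a ω * Z b ω ∂P)) := by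
          rw [integral_sub (hint _ _) (hint _ _), integral_sub (hint _ _) (hint _ _)]
  have cov1 := hcov (a + s) (b + s) (by linarith) (by linarith)
  have cov2 := hcov (a + s) b (by linarith) hb0
  have cov3 := hcov a (b + s) ha0 (by linarith)
  have cov4 := hcov a b ha0 hb0
  rw [show b + s - (a + s) = d by rw [hd_def]; ring, abs_of_pos hd0] at cov1
  rw [show b - (a + s) = d - s by rw [hd_def]; ring,
    abs_of_nonneg (by linarith : (0:ℝ) ≤ d - s)] at cov2
  rw [show b + s - a = d + s by rw [hd_def]; ring,
    abs_of_pos (by linarith : (0:ℝ) < d + s)] at cov3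
  rw [show b - a = d by rw [hd_def], abs_of_pos hd0] at cov4
  have hcomb : ∫ ω, (Z (a + s) ω - Z a ω) * (Z (b + s) ω - Z b ω) ∂P
      = (1 / 2) * ((d + s) ^ (2 * H) + (d - s) ^ (2 * H) - 2 * d ^ (2 * H)) := by
    rw [hI, cov1, cov2, cov3, cov4]; ring
  rw [hcomb]
  have hk := key_bound H hH0 hH1 s d hs0 hd0 hds
  have hdfac : d ^ (2 * H - 2) = ((k:ℝ) - (i:ℝ)) ^ (2 * H - 2) * (T + Δ) ^ (2 * H - 2) := by
    rw [hdval, Real.mul_rpow (by linarith) hTΔ.le]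
  have hTΔΔ : (T + Δ) ^ (2 * H - 2) ≤ Δ ^ (2 * H - 2) :=
    Real.rpow_le_rpow_of_nonpos (by linarith) (by linarith) (by linarith)
  have hki_nonneg : (0:ℝ) ≤ ((k:ℝ) - (i:ℝ)) ^ (2 * H - 2) :=
    Real.rpow_nonneg (by linarith) _
  calc |(1 / 2) * ((d + s) ^ (2 * H) + (d - s) ^ (2 * H) - 2 * d ^ (2 * H))|
      = (1 / 2) * |(d + s) ^ (2 * H) + (d - s) ^ (2 * H) - 2 * d ^ (2 * H)| := by
        rw [abs_mul]; norm_num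
    _ ≤ (1 / 2) * (16 * H * |2 * H - 1| * s ^ 2 * d ^ (2 * H - 2)) := by linarith
    _ = 8 * H * |2 * H - 1| * s ^ 2 * d ^ (2 * H - 2) := by ring
    _ ≤ 8 * H * |2 * H - 1| * T ^ 2 * d ^ (2 * H - 2) := by
        have hs2 : s ^ 2 ≤ T ^ 2 := by nlinarith
        have h0 : (0:ℝ) ≤ 8 * H * |2 * H - 1| := by positivity
        exact mul_le_mul_of_nonneg_right (mul_le_mul_of_nonneg_left hs2 h0)
          (Real.rpow_nonneg hd0.le _)
    _ = 8 * H * |2 * H - 1| * T ^ 2 * (((k:ℝ) - (i:ℝ)) ^ (2 * H - 2) * (T + Δ) ^ (2 * H - 2)) := by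
        rw [hdfac]
    _ ≤ 8 * H * |2 * H - 1| * T ^ 2 * (((k:ℝ) - (i:ℝ)) ^ (2 * H - 2) * Δ ^ (2 * H - 2)) := by
        have h1 : (0:ℝ) ≤ 8 * H * |2 * H - 1| * T ^ 2 := by positivity
        have h2 : ((k:ℝ) - (i:ℝ)) ^ (2 * H - 2) * (T + Δ) ^ (2 * H - 2)
            ≤ ((k:ℝ) - (i:ℝ)) ^ (2 * H - 2) * Δ ^ (2 * H - 2) :=
          mul_le_mul_of_nonneg_left hTΔΔ hki_nonneg
        exact mul_le_mul_of_nonneg_left h2 h1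
    _ = 8 * H * |2 * H - 1| * T ^ 2 * |(k:ℝ) - (i:ℝ)| ^ (2 * H - 2) * Δ ^ (2 * H - 2) := by
        rw [abs_of_nonneg (by linarith : (0:ℝ) ≤ (k:ℝ) - (i:ℝ))]; ring

/-- cross-covariance bound for increment copies of a fractional
Brownian motion separated by a forgetting period Δ ≥ T. -/
theorem stmt2
    {Ω : Type*} [MeasurableSpace Ω] (P : Measure Ω) [IsProbabilityMeasure P]
    (H : ℝ) (hH : H ∈ Set.Ioo (0:ℝ) 1)
    (T Δ : ℝ) (hT : 0 < T) (hΔ : T ≤ Δ) (N : ℕ)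
    (Z : ℝ → Ω → ℝ)
    -- fBm covariance
    (hcov : ∀ s t : ℝ, 0 ≤ s → 0 ≤ t →
      ∫ ω, Z s ω * Z t ω ∂P
        = (1 / 2) * (s ^ (2 * H) + t ^ (2 * H) - |t - s| ^ (2 * H)))
    (hint : ∀ s t : ℝ, Integrable (fun ω => Z s ω * Z t ω) P) :
    ∀ i k : ℕ, 1 ≤ i → i ≤ N → 1 ≤ k → k ≤ N → i ≠ k → ∀ s ∈ Set.Icc (0:ℝ) T,
      |∫ ω, (Z (((i : ℝ) - 1) * (T + Δ) + s) ω - Z (((i : ℝ) - 1) * (T + Δ)) ω)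
            * (Z (((k : ℝ) - 1) * (T + Δ) + s) ω - Z (((k : ℝ) - 1) * (T + Δ)) ω) ∂P|
        ≤ 8 * H * |2 * H - 1| * T ^ 2
            * |(k : ℝ) - (i : ℝ)| ^ (2 * H - 2) * Δ ^ (2 * H - 2) := by
  intro i k hi hiN hk hkN hne s hs
  rcases lt_or_gt_of_ne hne with h | h
  · exact cross_cov P H hH T Δ hT hΔ Z hcov hint i k hi h s hs
  · have hmain := cross_cov P H hH T Δ hT hΔ Z hcov hint k i hk h s hs
    have e : ∫ ω, (Z (((i : ℝ) - 1) * (T + Δ) + s) ω - Z (((i : ℝ) - 1) * (T + Δ)) ω)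
          * (Z (((k : ℝ) - 1) * (T + Δ) + s) ω - Z (((k : ℝ) - 1) * (T + Δ)) ω) ∂P
        = ∫ ω, (Z (((k : ℝ) - 1) * (T + Δ) + s) ω - Z (((k : ℝ) - 1) * (T + Δ)) ω)
          * (Z (((i : ℝ) - 1) * (T + Δ) + s) ω - Z (((i : ℝ) - 1) * (T + Δ)) ω) ∂P := by
      congr 1
      funext ω
      ring
    rw [e, show |(k:ℝ) - (i:ℝ)| = |(i:ℝ) - (k:ℝ)| from abs_sub_comm _ _]
    exact hmain
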